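/- Let F be any field. Then φ ∘ τ = ε_N ε_{N+1} · (τ' ∘ φ), where ε_R = (−1)^{R(R−1)/2} is the sign of the permutation of {1,…,R} reversing the positions in an R-tuple; in particular ε_N ε_{N+1} = (−1)^N. -/

import Mathlib

open MvPolynomial TensorProduct

set_option maxHeartbeats 1000000
set_option synthInstance.maxHeartbeats 400000

noncomputable section

/-- `Sym' F c` : the `c`-th symmetric power of `E = F²`, realised as the space of
homogeneous polynomials of degree `c` in the two variables `X = X 0`, `Y = X 1`. -/
abbrev Sym' (F : Type*) [Field F] (c : ℕ) : Type _ :=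
  ↥(MvPolynomial.homogeneousSubmodule (Fin 2) F c)

variable (F : Type*) [Field F]

/-- The basis monomial `X^(c-i) Y^i` of `Sym' F c`; it is `0` (junk) if `i > c`. -/
def XY (c i : ℕ) : Sym' F c :=
  if h : i ≤ c then
    ⟨(X 0 : MvPolynomial (Fin 2) F) ^ (c - i) * X 1 ^ i, by
      rw [MvPolynomial.mem_homogeneousSubmodule]
      have := ((isHomogeneous_X_pow (R := F) (0 : Fin 2) (c - i)).mul
        (isHomogeneous_X_pow (R := F) (1 : Fin 2) i))
      rwa [Nat.sub_add_cancel h] at this⟩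
  else 0

/-- `F_∧^{(c)}(k) = X^{c-k₁}Y^{k₁} ∧ ⋯ ∧ X^{c-k_r}Y^{k_r}` in `⋀^r (Sym' F c)`. -/
def wedge (c : ℕ) {r : ℕ} (k : Fin r → ℕ) : ⋀[F]^r (Sym' F c) :=
  ⟨ExteriorAlgebra.ιMulti F r fun a => XY F c (k a),
    ExteriorAlgebra.ιMulti_range F r (Set.mem_range_self _)⟩

/-- `F(i,j) = F_∧^{(d)}(i) ⊗ X^{d-j}Y^j`. -/
def Fp (d : ℕ) {N : ℕ} (i : Fin N → ℕ) (j : ℕ) :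
    (⋀[F]^N (Sym' F d)) ⊗[F] (Sym' F d) :=
  wedge F d i ⊗ₜ[F] XY F d j

/-- The multiplication map `μ_N : ⋀^N V ⊗ V → ⋀^{N+1} V` for `V = Sym' F c`. -/
def mu (c N : ℕ) :
    ((⋀[F]^N (Sym' F c)) ⊗[F] (Sym' F c)) →ₗ[F] ⋀[F]^(N + 1) (Sym' F c) :=
  TensorProduct.lift
    (LinearMap.mk₂ F
      (fun w v => ⟨(w : ExteriorAlgebra F (Sym' F c)) * ExteriorAlgebra.ι F v, by
        have h := Submodule.mul_mem_mul w.2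
          (LinearMap.mem_range_self (ExteriorAlgebra.ι F (M := Sym' F c)) v)
        rwa [← pow_succ] at h⟩)
      (fun w w' v => by ext; simp [add_mul])
      (fun a w v => by ext; simp [mul_assoc, Algebra.smul_mul_assoc])
      (fun w v v' => by ext; simp [mul_add])
      (fun a w v => by ext; simp [Algebra.mul_smul_comm]))

/-- The box `B(k) = [k₁,k₂) × ⋯ × [k_N, k_{N+1})` as a finset of multi-indices. -/
def box {N : ℕ} (k : Fin (N + 1) → ℕ) : Finset (Fin N → ℕ) :=
  Fintype.piFinset fun a : Fin N => Finset.Ico (k a.castSucc) (k a.succ)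

/-- `v_{(s,k)} = Σ_{i ∈ B(k)} F(i, s + |k| - N - |i|)`. -/
def vv (d N : ℕ) (s : ℕ) (k : Fin (N + 1) → ℕ) :
    (⋀[F]^N (Sym' F d)) ⊗[F] (Sym' F d) :=
  ∑ i ∈ box k, Fp F d i (s + (∑ a, k a) - N - ∑ a, i a)

/-- A pair `(i, j)` is semistandard (with entries in `{0,…,d}`). -/
def IsSS (d : ℕ) {N : ℕ} (p : (Fin N → ℕ) × ℕ) : Prop :=
  StrictMono p.1 ∧ (∀ a, p.1 a ≤ d) ∧ p.2 ≤ d ∧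
    ∀ a : Fin N, (a : ℕ) = 0 → p.1 a ≤ p.2

/-- The neighbour map `P`. -/
def Pmap {N : ℕ} (p : (Fin N → ℕ) × ℕ) : (Fin N → ℕ) × ℕ :=
  if h : (Finset.univ.filter fun a : Fin N => p.1 a ≤ p.2).Nonempty then
    let α := (Finset.univ.filter fun a : Fin N => p.1 a ≤ p.2).max' h
    (Function.update p.1 α p.2, p.1 α)
  else p

/-- `F_Δ(i,j)`. -/
def FDelta (d : ℕ) {N : ℕ} (p : (Fin N → ℕ) × ℕ) :
    (⋀[F]^N (Sym' F d)) ⊗[F] (Sym' F d) :=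
  if ∃ a, p.1 a = p.2 then Fp F d p.1 p.2
  else Fp F d p.1 p.2 + Fp F d (Pmap p).1 (Pmap p).2

/-- The content multiset of a pair. -/
def ssContent {N : ℕ} (p : (Fin N → ℕ) × ℕ) : Multiset ℕ :=
  p.2 ::ₘ Finset.univ.val.map p.1

abbrev Dom (N d : ℕ) : Type _ := (Sym' F (N - 1)) ⊗[F] ↥(⋀[F]^(N + 1) (Sym' F (d + 1)))

/-- The codomain `⋀^N Sym^d E ⊗ Sym^d E` of `φ`. -/
abbrev Cod (N d : ℕ) : Type _ := ↥(⋀[F]^N (Sym' F d)) ⊗[F] (Sym' F d)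

/-- The sign `ε_R = (-1)^{R(R-1)/2}` of the permutation of `{1,…,R}` reversing an `R`-tuple. -/
def eps (F : Type*) [Field F] (R : ℕ) : F := (-1 : F) ^ (R * (R - 1) / 2)


open Equiv


lemma tri_succ (n : ℕ) : (n+1)*n/2 = n*(n-1)/2 + n := by
  have h : (n+1)*n = n*(n-1) + 2*n := by
    cases n with
    | zero => rfl
    | succ m => simp [Nat.succ_sub_one]; ring
  rw [h, Nat.add_mul_div_left _ _ (by norm_num : (0:ℕ) < 2)]

lemma revPerm_succ (n : ℕ) :
    (Fin.revPerm : Perm (Fin (n+1))) =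
      finRotate (n+1) * (Fin.revPerm : Perm (Fin n)).viaFintypeEmbedding (Fin.castSuccEmb) := by
  ext i
  refine Fin.lastCases ?_ (fun x => ?_) i
  · have h1 : (Fin.revPerm : Perm (Fin n)).viaFintypeEmbedding (Fin.castSuccEmb) (Fin.last n)
        = Fin.last n := by
      apply Equiv.Perm.viaFintypeEmbedding_apply_notMem_range
      rintro ⟨x, hx⟩
      exact absurd hx (Fin.castSucc_lt_last x).ne
    simp [h1]
  · have h1 : (Fin.revPerm : Perm (Fin n)).viaFintypeEmbedding (Fin.castSuccEmb) x.castSucc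
        = (x.rev).castSucc := by
      have := Equiv.Perm.viaFintypeEmbedding_apply_image (Fin.revPerm : Perm (Fin n))
        Fin.castSuccEmb x
      simpa using this
    simp only [Perm.mul_apply, h1, finRotate_succ_apply, Fin.coeSucc_eq_succ, Fin.rev_castSucc,
      Fin.revPerm_apply]

lemma sign_revPerm (n : ℕ) :
    Equiv.Perm.sign (Fin.revPerm : Perm (Fin n)) = (-1) ^ (n*(n-1)/2) := by
  induction n with
  | zero => simp [Subsingleton.elim (Fin.revPerm : Perm (Fin 0)) 1]
  | succ m ih =>
    rw [revPerm_succ, map_mul, sign_finRotate, Equiv.Perm.viaFintypeEmbedding_sign, ih]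
    simp only [Nat.add_sub_cancel]
    rw [tri_succ, pow_add]
    exact mul_comm _ _

lemma wedge_perm (c : ℕ) {r : ℕ} (k : Fin r → ℕ) (σ : Equiv.Perm (Fin r)) :
    wedge F c (k ∘ σ) = ((Equiv.Perm.sign σ : ℤ) : F) • wedge F c k := by
  apply Subtype.ext
  have h := AlternatingMap.map_perm (ExteriorAlgebra.ιMulti F r (M := Sym' F c))
    (fun a => XY F c (k a)) σ
  have h2 : (wedge F c (k ∘ σ) : ExteriorAlgebra F (Sym' F c)) =
      ExteriorAlgebra.ιMulti F r ((fun a => XY F c (k a)) ∘ σ) := rfl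
  rw [h2, h]
  rw [Units.smul_def, ← Int.cast_smul_eq_zsmul F]
  rfl

lemma span_subtype_top {M : Type*} [AddCommGroup M] [Module F M] (W : Submodule F M)
    (S : Set ↥W) (h : W ≤ Submodule.span F (W.subtype '' S)) :
    Submodule.span F S = ⊤ := by
  rw [eq_top_iff]
  rintro x -
  have hx := h x.2
  rw [Submodule.span_image] at hx
  obtain ⟨y, hy, hxy⟩ := hx
  have : y = x := Subtype.ext hxy
  exact this ▸ hy

lemma XY_span (c : ℕ) :
    Submodule.span F (Set.range fun j : Fin (c+1) => XY F c (j:ℕ)) = ⊤ := by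
  apply span_subtype_top
  intro p hp
  have hsum := MvPolynomial.support_sum_monomial_coeff p
  rw [← hsum]
  apply Submodule.sum_mem
  intro m hm
  have hdeg : m 0 + m 1 = c := by
    have h1 : Finsupp.weight 1 m = c := hp (MvPolynomial.mem_support_iff.mp hm)
    have h2 : m.degree = m 0 + m 1 := by
      rw [Finsupp.degree_apply]
      rw [Finset.sum_subset (Finset.subset_univ m.support)]
      · exact Fin.sum_univ_two m
      · intro x _ hx
        exact Finsupp.notMem_support_iff.mp hx
    rw [Finsupp.degree_eq_weight_one] at h2
    rw [show (Finsupp.weight fun _ : Fin 2 => (1:ℕ)) = Finsupp.weight 1 from rfl, h1] at h2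
    omega
  have hm1 : m 1 ≤ c := by omega
  have key : MvPolynomial.monomial m (MvPolynomial.coeff m p)
      = (MvPolynomial.coeff m p) • (((homogeneousSubmodule (Fin 2) F c).subtype)
          (XY F c (m 1))) := by
    have hval : ((homogeneousSubmodule (Fin 2) F c).subtype) (XY F c (m 1))
        = (X 0 : MvPolynomial (Fin 2) F) ^ (c - m 1) * X 1 ^ (m 1) := by
      simp [XY, hm1]
    rw [hval]
    rw [MvPolynomial.X_pow_eq_monomial, MvPolynomial.X_pow_eq_monomial,
      MvPolynomial.monomial_mul, mul_one]
    have hm' : Finsupp.single (0 : Fin 2) (c - m 1) + Finsupp.single 1 (m 1) = m := by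
      ext i
      fin_cases i <;> simp [Finsupp.single_apply] <;> omega
    rw [hm']
    rw [MvPolynomial.smul_monomial, smul_eq_mul, mul_one]
  rw [key]
  apply Submodule.smul_mem
  apply Submodule.subset_span
  exact ⟨XY F c (m 1), ⟨⟨m 1, hm1.trans_lt (Nat.lt_succ_self c)⟩, by simp [Fin.val_cast_of_lt, Nat.lt_succ_of_le hm1]⟩, rfl⟩

lemma wedge_not_inj (c : ℕ) {r : ℕ} (k : Fin r → ℕ) (h : ¬ Function.Injective k) :
    wedge F c k = 0 := by
  apply Subtype.ext
  simp only [Function.Injective, not_forall] at h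
  obtain ⟨i, j, hij, hne⟩ := h
  exact AlternatingMap.map_eq_zero_of_eq _ _ (by rw [hij]) hne

lemma wedge_mem_span (c r : ℕ) (k : Fin r → ℕ) (hk : ∀ a, k a ≤ c) :
    (wedge F c k : ExteriorAlgebra F (Sym' F c)) ∈ Submodule.span F
      ((⋀[F]^r (Sym' F c)).subtype '' {w : ↥(⋀[F]^r (Sym' F c)) |
        ∃ k : Fin r → ℕ, StrictMono k ∧ (∀ a, k a ≤ c) ∧ w = wedge F c k}) := by
  by_cases hinj : Function.Injective k
  · set σ := Tuple.sort k with hσ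
    have hmono : Monotone (k ∘ σ) := Tuple.monotone_sort k
    have hsm : StrictMono (k ∘ σ) :=
      hmono.strictMono_of_injective (hinj.comp σ.injective)
    have hcomp : (k ∘ σ) ∘ ⇑σ⁻¹ = k := by
      funext a
      simp [Function.comp]
    have hw := wedge_perm F c (k ∘ σ) σ⁻¹
    rw [hcomp] at hw
    rw [hw]
    have : ((wedge F c (k ∘ σ) : ↥(⋀[F]^r (Sym' F c))) : ExteriorAlgebra F (Sym' F c)) ∈
        Submodule.span F ((⋀[F]^r (Sym' F c)).subtype '' {w : ↥(⋀[F]^r (Sym' F c)) |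
          ∃ k : Fin r → ℕ, StrictMono k ∧ (∀ a, k a ≤ c) ∧ w = wedge F c k}) :=
      Submodule.subset_span ⟨wedge F c (k ∘ σ), ⟨k ∘ σ, hsm, fun a => hk _, rfl⟩, rfl⟩
    simpa using Submodule.smul_mem _ (((Equiv.Perm.sign σ⁻¹ : ℤ) : F)) this
  · rw [wedge_not_inj F c k hinj]
    simp

lemma wedge_span (c r : ℕ) :
    Submodule.span F {w : ↥(⋀[F]^r (Sym' F c)) |
      ∃ k : Fin r → ℕ, StrictMono k ∧ (∀ a, k a ≤ c) ∧ w = wedge F c k} = ⊤ := by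
  apply span_subtype_top
  intro x hx
  rw [← ExteriorAlgebra.ιMulti_span_fixedDegree] at hx
  refine Submodule.span_le.mpr ?_ hx
  rintro _ ⟨v, rfl⟩
  have hv : ∀ i : Fin r, ∃ m : Fin (c+1) → F, ∑ j, m j • XY F c (j:ℕ) = v i := by
    intro i
    rw [← Submodule.mem_span_range_iff_exists_fun]
    rw [XY_span]
    trivial
  choose m hm using hv
  have expand : ExteriorAlgebra.ιMulti F r v
      = ∑ ρ : Fin r → Fin (c+1), (∏ i, m i (ρ i)) •
          ExteriorAlgebra.ιMulti F r (fun i => XY F c ((ρ i : ℕ))) := by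
    have h1 : v = fun i => ∑ j, m i j • XY F c (j:ℕ) := by
      funext i; rw [hm i]
    rw [h1]
    refine ((ExteriorAlgebra.ιMulti F r).toMultilinearMap.map_sum
      (g := fun i j => m i j • XY F c (j:ℕ))).trans ?_
    refine Finset.sum_congr rfl fun ρ _ => ?_
    exact (ExteriorAlgebra.ιMulti F r).toMultilinearMap.map_smul_univ
      (fun i => m i (ρ i)) (fun i => XY F c ((ρ i : ℕ)))
  rw [expand]
  apply Submodule.sum_mem
  intro ρ _
  apply Submodule.smul_mem
  exact wedge_mem_span F c r (fun i => (ρ i : ℕ)) (fun i => Nat.lt_succ_iff.mp (ρ i).2)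


lemma wedge_rev (c : ℕ) {r : ℕ} (k : Fin r → ℕ) :
    wedge F c (fun a => k a.rev) = ((-1:F) ^ (r*(r-1)/2)) • wedge F c k := by
  have h := wedge_perm F c k Fin.revPerm
  have e : k ∘ ⇑Fin.revPerm = fun a => k a.rev := rfl
  rw [e] at h
  rw [h, sign_revPerm]
  norm_num

lemma box_mem_iff {N : ℕ} {k : Fin (N+1) → ℕ} {i : Fin N → ℕ} :
    i ∈ box k ↔ ∀ a : Fin N, k a.castSucc ≤ i a ∧ i a < k a.succ := by
  simp [box, Finset.mem_Ico, Fintype.mem_piFinset]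

lemma box_rev {N d : ℕ} {k : Fin (N+1) → ℕ} (hk : ∀ a, k a ≤ d+1)
    {i : Fin N → ℕ} (hi : i ∈ box k) :
    (fun a => d - i a.rev) ∈ box (fun b => d + 1 - k b.rev) := by
  rw [box_mem_iff] at hi ⊢
  intro a
  have h1 := hi a.rev
  have h2 : (a.castSucc).rev = a.rev.succ := Fin.rev_castSucc a
  have h3 : (a.succ).rev = a.rev.castSucc := Fin.rev_succ a
  simp only [h2, h3]
  have := hk a.rev.succ
  have := hk a.rev.castSucc
  omega

lemma sum_sub_of_le {N : ℕ} (D : ℕ) (f : Fin N → ℕ) (hf : ∀ a, f a ≤ D) :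
    (∑ a, (D - f a)) + ∑ a, f a = N * D := by
  rw [← Finset.sum_add_distrib]
  have h : ∀ a : Fin N, (D - f a) + f a = D := fun a => Nat.sub_add_cancel (hf a)
  simp only [h, Finset.sum_const, Finset.card_univ, Fintype.card_fin, smul_eq_mul]

lemma sum_rev' {N : ℕ} (f : Fin N → ℕ) : ∑ a : Fin N, f a.rev = ∑ a, f a :=
  Fintype.sum_equiv Fin.revPerm _ _ (fun _ => rfl)

lemma box_sum_facts {N d : ℕ} {k : Fin (N+1) → ℕ} (hkb : ∀ a, k a ≤ d+1)
    {i : Fin N → ℕ} (hi : i ∈ box k) :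
    (∀ a, i a ≤ d) ∧
    (∑ a : Fin N, k a.castSucc) ≤ (∑ a, i a) ∧
    (∑ a, i a) + N ≤ (∑ a : Fin N, k a.succ) := by
  rw [box_mem_iff] at hi
  refine ⟨fun a => by have := (hi a).2; have := hkb a.succ; omega,
    Finset.sum_le_sum (fun a _ => (hi a).1), ?_⟩
  calc (∑ a, i a) + N = ∑ a : Fin N, (i a + 1) := by
        rw [Finset.sum_add_distrib]; simp
    _ ≤ ∑ a : Fin N, k a.succ := Finset.sum_le_sum (fun a _ => (hi a).2)

lemma core (N d : ℕ) (hN : 0 < N)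
    (φ : Dom F N d →ₗ[F] Cod F N d)
    (hφ : ∀ s < N, ∀ k : Fin (N + 1) → ℕ, StrictMono k → (∀ a, k a ≤ d + 1) →
      φ (XY F (N - 1) s ⊗ₜ[F] wedge F (d + 1) k) = vv F d N s k)
    (τ : Dom F N d →ₗ[F] Dom F N d)
    (hτ : ∀ j ≤ N - 1, ∀ i : Fin (N + 1) → ℕ, (∀ a, i a ≤ d + 1) →
      τ (XY F (N - 1) j ⊗ₜ[F] wedge F (d + 1) i) =
        XY F (N - 1) (N - 1 - j) ⊗ₜ[F] wedge F (d + 1) (fun a => d + 1 - i a))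
    (τ' : Cod F N d →ₗ[F] Cod F N d)
    (hτ' : ∀ j : Fin N → ℕ, (∀ a, j a ≤ d) → ∀ l ≤ d,
      τ' (wedge F d j ⊗ₜ[F] XY F d l) =
        wedge F d (fun a => d - j a) ⊗ₜ[F] XY F d (d - l))
    (s : ℕ) (hs : s < N) (k : Fin (N+1) → ℕ) (hk : StrictMono k) (hkb : ∀ a, k a ≤ d+1) :
    φ (τ (XY F (N-1) s ⊗ₜ[F] wedge F (d+1) k)) =
      ((-1:F)^(N*(N-1)/2) * (-1:F)^((N+1)*N/2)) •
        τ' (φ (XY F (N-1) s ⊗ₜ[F] wedge F (d+1) k)) := by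
  set k' : Fin (N+1) → ℕ := fun b => d + 1 - k b.rev with hk'def
  have hk'mono : StrictMono k' := by
    intro a b hab
    have h1 : b.rev < a.rev := Fin.rev_lt_rev.mpr hab
    have h2 := hk h1
    have := hkb a.rev
    simp only [hk'def]
    omega
  have hk'b : ∀ b, k' b ≤ d + 1 := fun b => Nat.sub_le _ _
  have hrevk' : (fun a : Fin (N+1) => k' a.rev) = fun a => d + 1 - k a := by
    funext a
    simp only [hk'def, Fin.rev_rev]
  have hk'k : (fun b : Fin (N+1) => d + 1 - k' b.rev) = k := by
    funext b
    simp only [hk'def, Fin.rev_rev]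
    have := hkb b
    omega
  have hprod : (N+1)*(d+1) = N*d + N + d + 1 := by ring
  -- sum facts
  have sumk' : (∑ b, k' b) + ∑ b, k b = (N+1)*(d+1) := by
    have h0 : (∑ b, k' b) = ∑ b, (d + 1 - k b) := by
      simp only [hk'def]
      exact sum_rev' (fun b => d + 1 - k b)
    rw [h0]
    exact sum_sub_of_le (d+1) k hkb
  rw [hprod] at sumk'
  have hcS : ∑ b, k b = (∑ a : Fin N, k a.castSucc) + k (Fin.last N) :=
    Fin.sum_univ_castSucc k
  have hsS : ∑ b, k b = k 0 + ∑ a : Fin N, k a.succ := Fin.sum_univ_succ k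
  have hcS' : ∑ b, k' b = (∑ a : Fin N, k' a.castSucc) + k' (Fin.last N) :=
    Fin.sum_univ_castSucc k'
  have hsS' : ∑ b, k' b = k' 0 + ∑ a : Fin N, k' a.succ := Fin.sum_univ_succ k'
  have hklast : k (Fin.last N) ≤ d + 1 := hkb _
  have hk'last : k' (Fin.last N) ≤ d + 1 := hk'b _
  -- LHS
  have hw1 := wedge_rev F (d+1) k'
  rw [hrevk'] at hw1
  rw [hτ s (by omega) k hkb, hw1, tmul_smul, map_smul,
    hφ (N-1-s) (by omega) k' hk'mono hk'b]
  -- RHS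
  rw [hφ s hs k hk hkb]
  have hτ'vv : τ' (vv F d N s k) =
      ∑ i ∈ box k, τ' (Fp F d i (s + (∑ a, k a) - N - ∑ a, i a)) := by
    rw [vv, map_sum]
  rw [hτ'vv]
  have term : ∀ i ∈ box k,
      τ' (Fp F d i (s + (∑ a, k a) - N - ∑ a, i a)) =
        ((-1:F)^(N*(N-1)/2)) •
          Fp F d (fun a => d - i a.rev) (d - (s + (∑ a, k a) - N - ∑ a, i a)) := by
    intro i hi
    obtain ⟨hid, hiC, hiS⟩ := box_sum_facts hkb hi
    have hjd : s + (∑ a, k a) - N - (∑ a, i a) ≤ d := by omega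
    rw [Fp, hτ' i hid _ hjd]
    have hw2 := wedge_rev F d (fun b : Fin N => d - i b.rev)
    simp only [Fin.rev_rev] at hw2
    rw [hw2, ← TensorProduct.smul_tmul']
    rfl
  rw [Finset.sum_congr rfl term, ← Finset.smul_sum]
  have key : (∑ i ∈ box k, Fp F d (fun a => d - i a.rev)
        (d - (s + (∑ a, k a) - N - ∑ a, i a))) = vv F d N (N-1-s) k' := by
    rw [vv]
    refine Finset.sum_nbij' (i := fun i => fun a => d - i a.rev)
      (j := fun i => fun a => d - i a.rev) ?_ ?_ ?_ ?_ ?_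
    · intro i hi
      exact box_rev (d := d) hkb hi
    · intro i hi
      have h := box_rev (d := d) hk'b hi
      rwa [hk'k] at h
    · intro i hi
      obtain ⟨hid, -, -⟩ := box_sum_facts hkb hi
      funext a
      simp only [Fin.rev_rev]
      have := hid a
      omega
    · intro i hi
      obtain ⟨hid, -, -⟩ := box_sum_facts hk'b hi
      funext a
      simp only [Fin.rev_rev]
      have := hid a
      omega
    · intro i hi
      obtain ⟨hid, hiC, hiS⟩ := box_sum_facts hkb hi
      have hei : (fun a => d - i a.rev) ∈ box k' := box_rev (d := d) hkb hi
      obtain ⟨hide, hiCe, hiSe⟩ := box_sum_facts hk'b hei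
      have sumei : (∑ a : Fin N, (d - i a.rev)) + ∑ a, i a = N * d := by
        have h0 : (∑ a : Fin N, (d - i a.rev)) = ∑ a, (d - i a) := sum_rev' (fun b => d - i b)
        rw [h0]
        exact sum_sub_of_le d i hid
      congr 1
      simp only at sumei hiCe hiSe ⊢
      generalize hQ : N * d = Q at sumk' sumei
      omega
  rw [← key, smul_smul]
  congr 1
  have hTT : (N+1)*((N+1)-1)/2 = (N+1)*N/2 := by simp
  rw [hTT]
  rw [mul_comm ((-1:F)^(N*(N-1)/2)) ((-1:F)^((N+1)*N/2)), mul_assoc, ← pow_add, ← two_mul,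
    pow_mul]
  norm_num

/-- Lemma 2.10 of the paper, third equation. Over any field `F`,
`φ ∘ τ = ε_N ε_{N+1} · (τ' ∘ φ)`, where `ε_R = (-1)^{R(R-1)/2}`; in particular
`ε_N ε_{N+1} = (-1)^N`. -/
theorem statement12 (F : Type*) [Field F] (N d : ℕ) (hN : 0 < N)
    (φ : Dom F N d →ₗ[F] Cod F N d)
    (hφ : ∀ s < N, ∀ k : Fin (N + 1) → ℕ, StrictMono k → (∀ a, k a ≤ d + 1) →
      φ (XY F (N - 1) s ⊗ₜ[F] wedge F (d + 1) k) = vv F d N s k)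
    (τ : Dom F N d →ₗ[F] Dom F N d)
    (hτ : ∀ j ≤ N - 1, ∀ i : Fin (N + 1) → ℕ, (∀ a, i a ≤ d + 1) →
      τ (XY F (N - 1) j ⊗ₜ[F] wedge F (d + 1) i) =
        XY F (N - 1) (N - 1 - j) ⊗ₜ[F] wedge F (d + 1) (fun a => d + 1 - i a))
    (τ' : Cod F N d →ₗ[F] Cod F N d)
    (hτ' : ∀ j : Fin N → ℕ, (∀ a, j a ≤ d) → ∀ l ≤ d,
      τ' (wedge F d j ⊗ₜ[F] XY F d l) =
        wedge F d (fun a => d - j a) ⊗ₜ[F] XY F d (d - l)) :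
    (∀ x : Dom F N d, φ (τ x) = (eps F N * eps F (N + 1)) • τ' (φ x)) ∧
    eps F N * eps F (N + 1) = (-1 : F) ^ N := by
  have hsign : eps F N * eps F (N + 1) = (-1 : F) ^ N := by
    rw [eps, eps, Nat.add_sub_cancel, tri_succ, ← pow_add,
      show N*(N-1)/2 + (N*(N-1)/2 + N) = 2*(N*(N-1)/2) + N by ring, pow_add, pow_mul]
    norm_num
  refine ⟨?_, hsign⟩
  intro x
  have hepsT : eps F N * eps F (N+1) = (-1:F)^(N*(N-1)/2) * (-1:F)^((N+1)*N/2) := by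
    rw [eps, eps, Nat.add_sub_cancel]
  have hmain : ∀ (sj : Fin (N-1+1)) (b : ↥(⋀[F]^(N+1) (Sym' F (d+1)))),
      φ (τ (XY F (N-1) (sj:ℕ) ⊗ₜ[F] b)) =
        ((-1:F)^(N*(N-1)/2) * (-1:F)^((N+1)*N/2)) • τ' (φ (XY F (N-1) (sj:ℕ) ⊗ₜ[F] b)) := by
    intro sj b
    have hb : b ∈ Submodule.span F {w : ↥(⋀[F]^(N+1) (Sym' F (d+1))) |
        ∃ k : Fin (N+1) → ℕ, StrictMono k ∧ (∀ a, k a ≤ d+1) ∧ w = wedge F (d+1) k} := by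
      rw [wedge_span]
      trivial
    induction hb using Submodule.span_induction with
    | mem w hw =>
      obtain ⟨k, hk1, hk2, rfl⟩ := hw
      exact core F N d hN φ hφ τ hτ τ' hτ' sj (by have := sj.isLt; omega) k hk1 hk2
    | zero => simp
    | add u v hu hv hu' hv' => simp only [tmul_add, map_add, hu', hv', smul_add]
    | smul a u hu hu' => simp only [tmul_smul, map_smul, hu', smul_comm a]
  have hLM : φ ∘ₗ τ = ((-1:F)^(N*(N-1)/2) * (-1:F)^((N+1)*N/2)) • (τ' ∘ₗ φ) := by
    apply TensorProduct.ext'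
    intro a b
    simp only [LinearMap.comp_apply, LinearMap.smul_apply]
    have ha : a ∈ Submodule.span F (Set.range fun j : Fin (N-1+1) => XY F (N-1) (j:ℕ)) := by
      rw [XY_span]
      trivial
    obtain ⟨m, hm⟩ := (Submodule.mem_span_range_iff_exists_fun F).mp ha
    rw [← hm, TensorProduct.sum_tmul]
    simp only [← TensorProduct.smul_tmul', TensorProduct.smul_tmul, map_sum, map_smul]
    rw [Finset.smul_sum]
    refine Finset.sum_congr rfl fun j _ => ?_
    rw [hmain j b, smul_comm]
  have hx := LinearMap.congr_fun hLM x
  simp only [LinearMap.comp_apply, LinearMap.smul_apply] at hx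
  rw [hepsT]
  exact hx

end
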